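/- For every positive integer n, every ω ∈ Ω and every t ∈ [0,1], one has | 2π n^{3/2} ∫_0^t ( ∫_0^s cos(2π H_n(ω,u)) du ) ds | ≤ 1/(π √n); in particular the processes 2π n^{3/2} ∫_0^t ∫_0^s cos(2π H_n(ω,u)) du ds converge to the zero process uniformly in t and ω as n → ∞. -/

import Mathlib

open MeasureTheory Real

lemma cos_affine_integral {c : ℝ} (hc : c ≠ 0) (d a b : ℝ) :
    ∫ u in a..b, Real.cos (c * u + d)
      = (Real.sin (c * b + d) - Real.sin (c * a + d)) / c := by
  rw [intervalIntegral.integral_comp_mul_add Real.cos hc d, integral_cos, smul_eq_mul]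
  ring

lemma sin_affine_integral {c : ℝ} (hc : c ≠ 0) (d a b : ℝ) :
    ∫ u in a..b, Real.sin (c * u + d)
      = (Real.cos (c * a + d) - Real.cos (c * b + d)) / c := by
  rw [intervalIntegral.integral_comp_mul_add Real.sin hc d, integral_sin, smul_eq_mul]
  ring

/-- Main computation: for a piecewise linear function with slopes `±n` and integer values
at the nodes `k/n`, the double integral of `cos (2π h)` has an explicit closed form. -/
lemma key_double_integral (n : ℕ) (hn : 1 ≤ n) (h : ℝ → ℝ) (S e : ℕ → ℝ)
    (hScos : ∀ k, Real.cos (2 * π * S k) = 1)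
    (hSsin : ∀ k, Real.sin (2 * π * S k) = 0)
    (he : ∀ k, e k = 1 ∨ e k = -1)
    (hstep : ∀ k, S (k + 1) = S k + e k)
    (hseg : ∀ k, k < n → ∀ u : ℝ, (k : ℝ) / n ≤ u → u ≤ ((k : ℝ) + 1) / n →
      h u = S k + n * e k * (u - (k : ℝ) / n)) :
    ∀ t ∈ Set.Icc (0:ℝ) 1,
      (∫ s in (0:ℝ)..t, (∫ u in (0:ℝ)..s, Real.cos (2 * π * h u)))
        = (1 - Real.cos (2 * π * h t)) / (4 * π ^ 2 * n ^ 2) := by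
  have hnR : (0:ℝ) < n := by exact_mod_cast hn
  have hn0 : (n:ℝ) ≠ 0 := ne_of_gt hnR
  have hπ : (0:ℝ) < π := Real.pi_pos
  have he0 : ∀ k, e k ≠ 0 := by intro k; rcases he k with h' | h' <;> rw [h'] <;> norm_num
  have hc0 : ∀ k, (2 * π * (n:ℝ) * e k) ≠ 0 := by
    intro k; exact mul_ne_zero (mul_ne_zero (mul_ne_zero two_ne_zero (ne_of_gt hπ)) hn0) (he0 k)
  -- the affine form of 2π h on segment k
  have haff : ∀ k, k < n → ∀ u : ℝ, (k : ℝ) / n ≤ u → u ≤ ((k : ℝ) + 1) / n →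
      2 * π * h u = (2 * π * (n:ℝ) * e k) * u + (2 * π * S k - 2 * π * e k * k) := by
    intro k hk u h1 h2
    rw [hseg k hk u h1 h2]
    field_simp
    ring
  -- values at nodes
  have hnode_top : h ((n : ℝ) / n) = S n := by
    have hn1 : n - 1 < n := by omega
    have hc : ((n - 1 : ℕ) : ℝ) = (n:ℝ) - 1 := by
      rw [Nat.cast_sub hn, Nat.cast_one]
    have h1 : ((n - 1 : ℕ) : ℝ) / n ≤ (n:ℝ)/n := by rw [hc]; gcongr; linarith
    have h2 : (n:ℝ)/n ≤ (((n - 1 : ℕ) : ℝ) + 1)/n := by rw [hc]; gcongr; linarith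
    have hv := hseg (n-1) hn1 ((n:ℝ)/n) h1 h2
    have hs : S ((n-1) + 1) = S (n-1) + e (n-1) := hstep (n-1)
    have hnn : n - 1 + 1 = n := by omega
    rw [hnn] at hs
    rw [hv, hs, hc]
    field_simp
    ring
  have hnode : ∀ k, k ≤ n → h ((k : ℝ) / n) = S k := by
    intro k hk
    rcases lt_or_eq_of_le hk with hk' | hk'
    · rw [hseg k hk' ((k:ℝ)/n) le_rfl (by gcongr <;> linarith)]
      ring
    · rw [hk']; exact hnode_top
  have hseg_le : ∀ k : ℕ, (k:ℝ)/n ≤ ((k:ℝ)+1)/n := by intro k; gcongr <;> linarith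
  -- inner integral over a subinterval of a segment
  have hfint : ∀ k, k < n → ∀ a b : ℝ,
      (k:ℝ)/n ≤ a → a ≤ ((k:ℝ)+1)/n → (k:ℝ)/n ≤ b → b ≤ ((k:ℝ)+1)/n →
      IntervalIntegrable (fun u => Real.cos (2 * π * h u)) volume a b ∧
      (∫ u in a..b, Real.cos (2 * π * h u))
        = e k * (Real.sin (2 * π * h b) - Real.sin (2 * π * h a)) / (2 * π * n) := by
    intro k hk a b ha1 ha2 hb1 hb2
    have hsub : Set.uIcc a b ⊆ Set.Icc ((k:ℝ)/n) (((k:ℝ)+1)/n) := by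
      rw [Set.uIcc]
      exact Set.Icc_subset_Icc (le_inf ha1 hb1) (sup_le ha2 hb2)
    have heq : Set.EqOn (fun u => Real.cos (2 * π * h u))
        (fun u => Real.cos ((2 * π * (n:ℝ) * e k) * u + (2 * π * S k - 2 * π * e k * k)))
        (Set.uIcc a b) := by
      intro u hu
      have hu' := hsub hu
      simp only
      rw [haff k hk u hu'.1 hu'.2]
    constructor
    · refine ContinuousOn.intervalIntegrable ?_
      exact ((Real.continuous_cos.comp (by continuity)).continuousOn).congr heq
    · rw [intervalIntegral.integral_congr heq, cos_affine_integral (hc0 k),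
        ← haff k hk a ha1 ha2, ← haff k hk b hb1 hb2]
      rcases he k with h' | h' <;> rw [h'] <;> ring
  -- F and its values
  set F : ℝ → ℝ := fun s => ∫ u in (0:ℝ)..s, Real.cos (2 * π * h u) with hFdef
  have hF0 : ∀ k, k ≤ n → IntervalIntegrable (fun u => Real.cos (2 * π * h u)) volume 0 ((k:ℝ)/n)
      ∧ F ((k:ℝ)/n) = 0 := by
    intro k hk
    induction k with
    | zero => simp [hFdef, IntervalIntegrable.refl]
    | succ k ih =>
      have hk' : k < n := by omega
      obtain ⟨ih1, ih2⟩ := ih (by omega)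
      obtain ⟨hint, hval⟩ := hfint k hk' ((k:ℝ)/n) (((k:ℝ)+1)/n) le_rfl (hseg_le k)
        (hseg_le k) le_rfl
      have hcast : (((k+1 : ℕ)):ℝ)/n = ((k:ℝ)+1)/n := by push_cast; ring
      constructor
      · rw [hcast]; exact ih1.trans hint
      · have hadd := intervalIntegral.integral_add_adjacent_intervals ih1 hint
        have hhk : h ((k:ℝ)/n) = S k := hnode k (le_of_lt hk')
        have hhk1 : h (((k:ℝ)+1)/n) = S (k+1) := by
          have := hnode (k+1) hk
          rwa [hcast] at this
        rw [hFdef]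
        simp only
        rw [hcast, ← hadd]
        rw [hFdef] at ih2; simp only at ih2
        rw [ih2, hval, hhk, hhk1, hSsin, hSsin]
        ring
  have hFval : ∀ k, k < n → ∀ s : ℝ, (k:ℝ)/n ≤ s → s ≤ ((k:ℝ)+1)/n →
      F s = e k * Real.sin (2 * π * h s) / (2 * π * n) := by
    intro k hk s hs1 hs2
    obtain ⟨h01, h02⟩ := hF0 k (le_of_lt hk)
    obtain ⟨hint, hval⟩ := hfint k hk ((k:ℝ)/n) s le_rfl (hseg_le k) hs1 hs2
    have hadd := intervalIntegral.integral_add_adjacent_intervals h01 hint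
    rw [hFdef]; simp only
    rw [← hadd]
    rw [hFdef] at h02; simp only at h02
    rw [h02, hval, hnode k (le_of_lt hk), hSsin]
    ring
  -- outer integral over a subinterval of a segment
  have hGint : ∀ k, k < n → ∀ a b : ℝ,
      (k:ℝ)/n ≤ a → a ≤ ((k:ℝ)+1)/n → (k:ℝ)/n ≤ b → b ≤ ((k:ℝ)+1)/n →
      IntervalIntegrable F volume a b ∧
      (∫ s in a..b, F s)
        = (Real.cos (2 * π * h a) - Real.cos (2 * π * h b)) / (4 * π ^ 2 * n ^ 2) := by
    intro k hk a b ha1 ha2 hb1 hb2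
    have hsub : Set.uIcc a b ⊆ Set.Icc ((k:ℝ)/n) (((k:ℝ)+1)/n) := by
      rw [Set.uIcc]
      exact Set.Icc_subset_Icc (le_inf ha1 hb1) (sup_le ha2 hb2)
    have heq : Set.EqOn F
        (fun s => e k / (2 * π * n) *
          Real.sin ((2 * π * (n:ℝ) * e k) * s + (2 * π * S k - 2 * π * e k * k)))
        (Set.uIcc a b) := by
      intro s hs
      have hs' := hsub hs
      simp only
      rw [← haff k hk s hs'.1 hs'.2, hFval k hk s hs'.1 hs'.2]
      ring
    constructor
    · refine ContinuousOn.intervalIntegrable ?_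
      refine ContinuousOn.congr ?_ heq
      exact (continuous_const.mul (Real.continuous_sin.comp (by continuity))).continuousOn
    · rw [intervalIntegral.integral_congr heq, intervalIntegral.integral_const_mul,
        sin_affine_integral (hc0 k), ← haff k hk a ha1 ha2, ← haff k hk b hb1 hb2]
      rcases he k with h' | h' <;> rw [h'] <;> ring
  -- zero at nodes for the outer integral
  have hG0 : ∀ k, k ≤ n → IntervalIntegrable F volume 0 ((k:ℝ)/n)
      ∧ (∫ s in (0:ℝ)..((k:ℝ)/n), F s) = 0 := by
    intro k hk
    induction k with
    | zero => simp [IntervalIntegrable.refl]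
    | succ k ih =>
      have hk' : k < n := by omega
      obtain ⟨ih1, ih2⟩ := ih (by omega)
      obtain ⟨hint, hval⟩ := hGint k hk' ((k:ℝ)/n) (((k:ℝ)+1)/n) le_rfl (hseg_le k)
        (hseg_le k) le_rfl
      have hcast : (((k+1 : ℕ)):ℝ)/n = ((k:ℝ)+1)/n := by push_cast; ring
      constructor
      · rw [hcast]; exact ih1.trans hint
      · rw [hcast, ← intervalIntegral.integral_add_adjacent_intervals ih1 hint, ih2, hval,
          hnode k (le_of_lt hk')]
        have hhk1 : h (((k:ℝ)+1)/n) = S (k+1) := by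
          have := hnode (k+1) hk
          rwa [hcast] at this
        rw [hhk1, hScos, hScos]
        ring
  -- conclusion
  intro t ht
  obtain ⟨ht0, ht1⟩ := ht
  -- find the segment containing t
  obtain ⟨k, hk, hk1, hk2⟩ : ∃ k : ℕ, k < n ∧ (k:ℝ)/n ≤ t ∧ t ≤ ((k:ℝ)+1)/n := by
    by_cases htop : 1 ≤ t
    · have ht1' : t = 1 := le_antisymm ht1 htop
      have hc : ((n - 1 : ℕ) : ℝ) = (n:ℝ) - 1 := by
        rw [Nat.cast_sub hn, Nat.cast_one]
      refine ⟨n - 1, by omega, ?_, ?_⟩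
      · rw [ht1', hc, div_le_iff₀ hnR]; linarith
      · rw [ht1', hc, le_div_iff₀ hnR]; linarith
    · push_neg at htop
      have hfl0 : (0:ℤ) ≤ ⌊(n:ℝ) * t⌋ := Int.floor_nonneg.mpr (by positivity)
      have hcast : (((⌊(n:ℝ) * t⌋).toNat : ℕ) : ℝ) = ((⌊(n:ℝ) * t⌋ : ℤ) : ℝ) := by
        rw [← Int.cast_natCast, Int.toNat_of_nonneg hfl0]
      have hm1 : (((⌊(n:ℝ) * t⌋).toNat : ℕ) : ℝ) ≤ (n:ℝ) * t := by
        rw [hcast]; exact Int.floor_le _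
      have hm2 : (n:ℝ) * t < (((⌊(n:ℝ) * t⌋).toNat : ℕ) : ℝ) + 1 := by
        rw [hcast]; exact Int.lt_floor_add_one _
      have hmn : (⌊(n:ℝ) * t⌋).toNat < n := by
        have hlt : (((⌊(n:ℝ) * t⌋).toNat : ℕ) : ℝ) < (n:ℝ) := by nlinarith
        exact_mod_cast hlt
      refine ⟨(⌊(n:ℝ) * t⌋).toNat, hmn, ?_, ?_⟩
      · rw [div_le_iff₀ hnR]; linarith
      · rw [le_div_iff₀ hnR]; linarith
  obtain ⟨h01, h02⟩ := hG0 k (le_of_lt hk)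
  obtain ⟨hint, hval⟩ := hGint k hk ((k:ℝ)/n) t le_rfl (hseg_le k) hk1 hk2
  rw [← intervalIntegral.integral_add_adjacent_intervals h01 hint, h02, hval,
    hnode k (le_of_lt hk), hScos]
  ring

/-- For all `n ≥ 1`, `ω` and `t ∈ [0,1]`,
`|2πn^{3/2} ∫_0^t ∫_0^s cos(2πH_n(ω,u)) du ds| ≤ 1/(π√n)`; in particular these processes
converge to the zero process uniformly in `t` and `ω`. -/
theorem scaled_cos_double_integral_vanishes
    {Ω : Type*} [MeasurableSpace Ω] (P : MeasureTheory.Measure Ω)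
    [MeasureTheory.IsProbabilityMeasure P]
    (X : ℕ → Ω → ℝ) (hXmeas : ∀ k, Measurable (X k))
    (hiid : ProbabilityTheory.iIndepFun X P)
    (hdist : ∀ k, P {ω | X k ω = 1} = 1/2 ∧ P {ω | X k ω = -1} = 1/2)
    (hpm : ∀ k ω, X k ω = 1 ∨ X k ω = -1)
    (H : ℕ → Ω → ℝ → ℝ)
    (hH : ∀ n : ℕ, 1 ≤ n → ∀ (ω : Ω) (k : ℕ), k ≤ n - 1 → ∀ u : ℝ,
      (k : ℝ) / n ≤ u → u ≤ ((k : ℝ) + 1) / n →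
      H n ω u = (∑ i ∈ Finset.range k, X (i + 1) ω) + n * X (k + 1) ω * (u - (k : ℝ) / n))
    :
    (∀ (n : ℕ), 1 ≤ n → ∀ (ω : Ω), ∀ t ∈ Set.Icc (0:ℝ) 1,
      |2 * π * (n : ℝ) ^ ((3:ℝ)/2) *
        ∫ s in (0:ℝ)..t, (∫ u in (0:ℝ)..s, Real.cos (2 * π * H n ω u))| ≤
      1 / (π * Real.sqrt n)) ∧
    (∀ ε : ℝ, 0 < ε → ∃ N : ℕ, ∀ n : ℕ, N ≤ n → ∀ (ω : Ω), ∀ t ∈ Set.Icc (0:ℝ) 1,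
      |2 * π * (n : ℝ) ^ ((3:ℝ)/2) *
        ∫ s in (0:ℝ)..t, (∫ u in (0:ℝ)..s, Real.cos (2 * π * H n ω u))| ≤ ε) := by
  have hbound : ∀ (n : ℕ), 1 ≤ n → ∀ (ω : Ω), ∀ t ∈ Set.Icc (0:ℝ) 1,
      |2 * π * (n : ℝ) ^ ((3:ℝ)/2) *
        ∫ s in (0:ℝ)..t, (∫ u in (0:ℝ)..s, Real.cos (2 * π * H n ω u))| ≤
      1 / (π * Real.sqrt n) := by
    intro n hn ω t ht
    have hnR : (0:ℝ) < n := by exact_mod_cast hn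
    have hπ : (0:ℝ) < π := Real.pi_pos
    have hπ0 : (π:ℝ) ≠ 0 := ne_of_gt hπ
    -- integer values at nodes
    have hSint : ∀ k : ℕ, ∃ m : ℤ, (∑ i ∈ Finset.range k, X (i + 1) ω) = (m:ℝ) := by
      intro k
      induction k with
      | zero => exact ⟨0, by simp⟩
      | succ k ih =>
        obtain ⟨m, hm⟩ := ih
        rcases hpm (k+1) ω with h' | h'
        · exact ⟨m + 1, by rw [Finset.sum_range_succ, hm, h']; push_cast; ring⟩
        · exact ⟨m - 1, by rw [Finset.sum_range_succ, hm, h']; push_cast; ring⟩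
    have hScos : ∀ k : ℕ, Real.cos (2 * π * (∑ i ∈ Finset.range k, X (i + 1) ω)) = 1 := by
      intro k
      obtain ⟨m, hm⟩ := hSint k
      rw [hm, show 2 * π * (m:ℝ) = (m:ℝ) * (2 * π) by ring, Real.cos_int_mul_two_pi]
    have hSsin : ∀ k : ℕ, Real.sin (2 * π * (∑ i ∈ Finset.range k, X (i + 1) ω)) = 0 := by
      intro k
      obtain ⟨m, hm⟩ := hSint k
      rw [hm, show 2 * π * (m:ℝ) = ((2 * m : ℤ):ℝ) * π by push_cast; ring,
        Real.sin_int_mul_pi]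
    have hseg : ∀ k, k < n → ∀ u : ℝ, (k:ℝ)/n ≤ u → u ≤ ((k:ℝ)+1)/n →
        H n ω u = (∑ i ∈ Finset.range k, X (i + 1) ω)
          + n * X (k+1) ω * (u - (k:ℝ)/n) := by
      intro k hk u h1 h2
      exact hH n hn ω k (by omega) u h1 h2
    have hkey := key_double_integral n hn (H n ω)
      (fun k => ∑ i ∈ Finset.range k, X (i + 1) ω) (fun k => X (k+1) ω)
      hScos hSsin (fun k => hpm (k+1) ω)
      (fun k => Finset.sum_range_succ (fun i => X (i+1) ω) k) hseg t ht
    rw [hkey]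
    -- numeric bound
    set x := Real.cos (2 * π * H n ω t) with hx
    have hx1 : x ≤ 1 := Real.cos_le_one _
    have hx2 : -1 ≤ x := Real.neg_one_le_cos _
    set s := Real.sqrt (n:ℝ) with hsdef
    have hs0 : 0 < s := Real.sqrt_pos.mpr hnR
    have hs0' : s ≠ 0 := ne_of_gt hs0
    have hss : s * s = (n:ℝ) := Real.mul_self_sqrt (le_of_lt hnR)
    have hr : (n:ℝ) ^ ((3:ℝ)/2) = s * (n:ℝ) := by
      rw [hsdef, Real.sqrt_eq_rpow, show (3:ℝ)/2 = 1/2 + 1 by norm_num,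
        Real.rpow_add hnR, Real.rpow_one]
    have hnn : 0 ≤ 2 * π * ((n:ℝ) ^ ((3:ℝ)/2)) *
        ((1 - x) / (4 * π ^ 2 * (n:ℝ) ^ 2)) := by
      apply mul_nonneg (by positivity)
      exact div_nonneg (by linarith) (by positivity)
    rw [abs_of_nonneg hnn, hr, ← hss]
    calc 2 * π * (s * (s * s)) * ((1 - x) / (4 * π ^ 2 * (s * s) ^ 2))
        = (1 - x) / (2 * π * s) := by field_simp; ring
      _ ≤ 2 / (2 * π * s) := by gcongr; linarith
      _ = 1 / (π * s) := by ring
  refine ⟨hbound, ?_⟩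
  intro ε hε
  obtain ⟨N, hN⟩ := exists_nat_gt (1/ε^2)
  refine ⟨N + 1, ?_⟩
  intro n hn ω t ht
  have h1 : 1 ≤ n := by omega
  refine le_trans (hbound n h1 ω t ht) ?_
  have hnR : (0:ℝ) < n := by exact_mod_cast h1
  have hs0 : 0 < Real.sqrt n := Real.sqrt_pos.mpr hnR
  have hπ1 : 1 ≤ π := by linarith [Real.pi_gt_three]
  have hn_ge : 1/ε^2 ≤ (n:ℝ) := by
    have hNn : (N:ℝ) ≤ (n:ℝ) := by exact_mod_cast (by omega : N ≤ n)
    linarith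
  have hsq : (1:ℝ)/ε ≤ Real.sqrt n := by
    have h' := Real.sqrt_le_sqrt hn_ge
    rwa [show (1:ℝ)/ε^2 = (1/ε)^2 by ring, Real.sqrt_sq (by positivity)] at h'
  have h2 : 1/Real.sqrt n ≤ ε := by
    rw [div_le_iff₀ hs0]
    have h3 := mul_le_mul_of_nonneg_left hsq (le_of_lt hε)
    rw [mul_one_div_cancel (ne_of_gt hε)] at h3
    linarith
  have h3 : 1/(π * Real.sqrt n) ≤ 1/Real.sqrt n := by
    apply one_div_le_one_div_of_le hs0
    nlinarith
  linarith
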